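/- If A² = 4α²q² and λ = 2(p-1)|A|^{p-2}α²(2q²-1), then k(s) := A·cn_p(αs + β, q) satisfies the Euler–Lagrange equation p(|k|^{p-2}k)'' + (p-1)|k|^p k − λk = 0 pointwise. -/

import Mathlib

open Real MeasureTheory Set intervalIntegral Filter

noncomputable section

/-- Incomplete p-elliptic integral of the first kind, type 1. -/
def F1 (p q x : ℝ) : ℝ :=
  ∫ θ in (0:ℝ)..x, |Real.cos θ| ^ (1 - 2/p) / Real.sqrt (1 - q^2 * Real.sin θ ^ 2)

/-- Complete p-elliptic integral of the first kind, type 1. -/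
def K1 (p q : ℝ) : ℝ := F1 p q (π/2)

/-- Incomplete p-elliptic integral of the second kind, type 1. -/
def E1 (p q x : ℝ) : ℝ :=
  ∫ θ in (0:ℝ)..x, Real.sqrt (1 - q^2 * Real.sin θ ^ 2) * |Real.cos θ| ^ (1 - 2/p)

/-- Complete p-elliptic integral of the second kind, type 1. -/
def E1c (p q : ℝ) : ℝ := E1 p q (π/2)

/-- Incomplete p-elliptic integral of the first kind, type 2. -/
def F2 (p q x : ℝ) : ℝ :=
  ∫ θ in (0:ℝ)..x, (1 - q^2 * Real.sin θ ^ 2) ^ (-(1/p))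

/-- Complete p-elliptic integral of the first kind, type 2. -/
def K2 (p q : ℝ) : ℝ := F2 p q (π/2)

open Classical in
/-- Domain of the amplitude parametrization: restricted to `(-π/2, π/2)` when `q = 1` and `p ≤ 2`. -/
def amDom (p q : ℝ) : Set ℝ := if q = 1 ∧ p ≤ 2 then Ioo (-(π/2)) (π/2) else univ

/-- `g` is the inverse of `f`, with `f` regarded as a bijection from `S` onto `ℝ`. -/
def IsInverseOn (f g : ℝ → ℝ) (S : Set ℝ) : Prop :=
  (∀ y ∈ S, g (f y) = y) ∧ ∀ x : ℝ, g x ∈ S ∧ f (g x) = x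



open scoped Topology

/-- Local version of `hasDerivAt_of_hasDerivAt_of_ne`. -/
theorem hasDerivAt_of_eventually_hasDerivAt {f g : ℝ → ℝ} {x : ℝ}
    (hd : ∀ᶠ y in 𝓝[≠] x, HasDerivAt f (g y) y)
    (hf : ContinuousAt f x) (hg : ContinuousAt g x) : HasDerivAt f (g x) x := by
  obtain ⟨δ, hδ, hδd⟩ : ∃ δ > 0, ∀ y, y ∈ Metric.ball x δ \ {x} → HasDerivAt f (g y) y := by
    rcases Metric.mem_nhdsWithin_iff.1 hd with ⟨δ, hδ, h⟩
    exact ⟨δ, hδ, fun y hy => h (by rw [Set.diff_eq] at hy; exact hy)⟩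
  have A : HasDerivWithinAt f (g x) (Ici x) x := by
    have hsub : Ioo x (x + δ) ⊆ Metric.ball x δ \ {x} := by
      intro y hy
      refine ⟨Metric.mem_ball.2 ?_, ne_of_gt hy.1⟩
      rw [Real.dist_eq, abs_of_pos (by linarith [hy.1])]
      linarith [hy.2]
    have diff : DifferentiableOn ℝ f (Ioo x (x + δ)) := fun y hy =>
      (hδd y (hsub hy)).differentiableAt.differentiableWithinAt
    apply hasDerivWithinAt_Ici_of_tendsto_deriv diff hf.continuousWithinAt
      (Ioo_mem_nhdsGT_of_mem (show x ∈ Ico x (x + δ) from ⟨le_refl x, by linarith⟩))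
    have : Tendsto g (𝓝[>] x) (𝓝 (g x)) := tendsto_inf_left hg
    apply this.congr'
    filter_upwards [Ioo_mem_nhdsGT_of_mem (show x ∈ Ico x (x + δ) from ⟨le_refl x, by linarith⟩)] with y hy
    exact ((hδd y (hsub hy)).deriv).symm
  have B : HasDerivWithinAt f (g x) (Iic x) x := by
    have hsub : Ioo (x - δ) x ⊆ Metric.ball x δ \ {x} := by
      intro y hy
      refine ⟨Metric.mem_ball.2 ?_, ne_of_lt hy.2⟩
      rw [Real.dist_eq, abs_of_neg (by linarith [hy.2])]
      linarith [hy.1]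
    have diff : DifferentiableOn ℝ f (Ioo (x - δ) x) := fun y hy =>
      (hδd y (hsub hy)).differentiableAt.differentiableWithinAt
    apply hasDerivWithinAt_Iic_of_tendsto_deriv diff hf.continuousWithinAt
      (Ioo_mem_nhdsLT_of_mem (show x ∈ Ioc (x - δ) x from ⟨by linarith, le_refl x⟩))
    have : Tendsto g (𝓝[<] x) (𝓝 (g x)) := tendsto_inf_left hg
    apply this.congr'
    filter_upwards [Ioo_mem_nhdsLT_of_mem (show x ∈ Ioc (x - δ) x from ⟨by linarith, le_refl x⟩)] with y hy
    exact ((hδd y (hsub hy)).deriv).symm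
  simpa using B.union A

theorem aux_sin_lb {u : ℝ} (h : |u| ≤ 1) : |u| / 2 ≤ |Real.sin u| := by
  have key : ∀ v : ℝ, 0 ≤ v → v ≤ 1 → v / 2 ≤ |Real.sin v| := by
    intro v hv0 hv1
    rcases eq_or_lt_of_le hv0 with rfl | hv
    · simp
    · have h1 := Real.sin_gt_sub_cube hv
      have hv2 : v ^ 2 ≤ 1 := by nlinarith
      have hcube : v ^ 3 ≤ v := by nlinarith [mul_le_mul_of_nonneg_left hv2 hv0]
      have h4 : 0 < Real.sin v := by nlinarith
      rw [abs_of_pos h4]; nlinarith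
  have habs : |Real.sin u| = abs (Real.sin (abs u)) := by
    rcases abs_cases u with ⟨h1, _⟩ | ⟨h1, _⟩
    · rw [h1]
    · rw [h1, Real.sin_neg, abs_neg]
  rw [habs]
  exact key _ (abs_nonneg u) h

theorem aux_cos_shift {x₀ : ℝ} (h : Real.cos x₀ = 0) (θ : ℝ) :
    |Real.cos θ| = |Real.sin (θ - x₀)| := by
  have h1 : Real.sin x₀ ^ 2 = 1 := by nlinarith [Real.sin_sq_add_cos_sq x₀]
  have h2 : |Real.sin x₀| = 1 := by
    rw [← Real.sqrt_sq_eq_abs, h1, Real.sqrt_one]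
  have h3 : Real.cos θ = Real.cos (x₀ + (θ - x₀)) := by ring_nf
  rw [h3, Real.cos_add, h, zero_mul, zero_sub, abs_neg, abs_mul, h2, one_mul]

theorem aux_cont_abs_rpow_mul {t : ℝ} (ht : -1 < t) :
    ContinuousAt (fun x : ℝ => |x| ^ t * x) 0 := by
  have hb : Tendsto (fun x : ℝ => |x| ^ (t + 1)) (𝓝 0) (𝓝 0) := by
    have h1 := (Real.continuousAt_rpow_const (|(0:ℝ)|) (t + 1)
      (Or.inr (by linarith))).comp (continuous_abs.continuousAt (x := (0:ℝ)))
    simpa [ContinuousAt, Function.comp_def, abs_zero,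
      Real.zero_rpow (by linarith : t + 1 ≠ 0)] using h1
  have key : Tendsto (fun x : ℝ => |x| ^ t * x) (𝓝 0) (𝓝 0) := by
    apply squeeze_zero_norm _ hb
    intro x
    rcases eq_or_ne x 0 with rfl | hx
    · simp [Real.zero_rpow (by linarith : t + 1 ≠ 0)]
    · have hax : (0:ℝ) < |x| := abs_pos.2 hx
      rw [Real.norm_eq_abs, abs_mul, abs_of_nonneg (Real.rpow_nonneg (abs_nonneg x) t),
        Real.rpow_add_one (ne_of_gt hax)]
  simpa [ContinuousAt] using key

theorem aux_deriv_abs_cos_rpow_mul {t θ₀ : ℝ} (h : Real.cos θ₀ ≠ 0) :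
    HasDerivAt (fun θ => |Real.cos θ| ^ t * Real.cos θ)
      (-((t + 1) * (|Real.cos θ₀| ^ t * Real.sin θ₀))) θ₀ := by
  rcases lt_or_gt_of_ne h with hneg | hpos
  · have hev : ∀ᶠ θ in 𝓝 θ₀, Real.cos θ < 0 :=
      (isOpen_lt Real.continuous_cos continuous_const).mem_nhds hneg
    have h1 : HasDerivAt (fun θ => -Real.cos θ) (Real.sin θ₀) θ₀ := by
      simpa using (Real.hasDerivAt_cos θ₀).fun_neg
    have h2 := (h1.rpow_const (p := t + 1) (Or.inl (by simpa using h))).fun_neg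
    have hD : HasDerivAt (fun θ => -((-Real.cos θ) ^ (t + 1)))
        (-((t + 1) * ((-Real.cos θ₀) ^ t * Real.sin θ₀))) θ₀ := by
      refine h2.congr_deriv ?_
      rw [add_sub_cancel_right]; ring
    have heq : (fun θ => |Real.cos θ| ^ t * Real.cos θ)
        =ᶠ[𝓝 θ₀] (fun θ => -((-Real.cos θ) ^ (t + 1))) := by
      filter_upwards [hev] with θ hθ
      rw [abs_of_neg hθ, Real.rpow_add_one (by simpa using ne_of_lt hθ)]
      ring
    rw [abs_of_neg hneg]
    exact hD.congr_of_eventuallyEq heq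
  · have hev : ∀ᶠ θ in 𝓝 θ₀, 0 < Real.cos θ :=
      (isOpen_lt continuous_const Real.continuous_cos).mem_nhds hpos
    have h2 := (Real.hasDerivAt_cos θ₀).rpow_const (p := t + 1) (Or.inl (ne_of_gt hpos))
    have hD : HasDerivAt (fun θ => Real.cos θ ^ (t + 1))
        (-((t + 1) * (Real.cos θ₀ ^ t * Real.sin θ₀))) θ₀ := by
      convert h2 using 1
      rw [add_sub_cancel_right]; ring
    have heq : (fun θ => |Real.cos θ| ^ t * Real.cos θ)
        =ᶠ[𝓝 θ₀] (fun θ => Real.cos θ ^ (t + 1)) := by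
      filter_upwards [hev] with θ hθ
      rw [abs_of_pos hθ, Real.rpow_add_one (ne_of_gt hθ)]
    rw [abs_of_pos hpos]
    exact hD.congr_of_eventuallyEq heq

theorem aux_deriv_sin_sqrt {q θ₀ : ℝ} (h : 0 < 1 - q^2 * Real.sin θ₀ ^ 2) :
    HasDerivAt (fun θ => Real.sin θ * Real.sqrt (1 - q^2 * Real.sin θ ^ 2))
      (Real.cos θ₀ * (1 - 2*q^2 * Real.sin θ₀ ^ 2) / Real.sqrt (1 - q^2 * Real.sin θ₀ ^ 2))
      θ₀ := by
  have hs : HasDerivAt (fun θ => 1 - q^2 * Real.sin θ ^ 2)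
      (-(q^2 * (2 * Real.sin θ₀ * Real.cos θ₀))) θ₀ := by
    have := ((Real.hasDerivAt_sin θ₀).pow 2).const_mul (q^2)
    simpa using (this.const_sub 1)
  have hsq := hs.sqrt (ne_of_gt h)
  have hmul := (Real.hasDerivAt_sin θ₀).mul hsq
  refine HasDerivAt.congr_deriv hmul ?_
  symm
  have hpos : 0 < Real.sqrt (1 - q^2 * Real.sin θ₀ ^ 2) := Real.sqrt_pos.2 h
  have hsq' : Real.sqrt (1 - q^2 * Real.sin θ₀ ^ 2) ^ 2 = 1 - q^2 * Real.sin θ₀ ^ 2 :=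
    Real.sq_sqrt (le_of_lt h)
  field_simp
  linear_combination (-Real.cos θ₀) * hsq'

theorem aux_integrableOn_abs_sub_rpow {r : ℝ} (hr : -1 < r) (x₀ : ℝ) :
    IntegrableOn (fun θ => |θ - x₀| ^ r) (Set.Ioo (x₀ - 1) (x₀ + 1)) volume := by
  have hright : IntegrableOn (fun θ => |θ - x₀| ^ r) (Set.Ioc x₀ (x₀ + 1)) volume := by
    have h1 : IntervalIntegrable (fun x : ℝ => x ^ r) volume 0 1 :=
      intervalIntegral.intervalIntegrable_rpow' hr
    have h2 := h1.comp_sub_right x₀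
    rw [zero_add] at h2
    have h3 : IntegrableOn (fun θ => (θ - x₀) ^ r) (Set.Ioc x₀ (x₀ + 1)) volume := by
      have := (intervalIntegrable_iff_integrableOn_Ioc_of_le (by linarith : x₀ ≤ 1 + x₀)).1 h2
      rw [add_comm]
      exact this
    apply h3.congr_fun ?_ measurableSet_Ioc
    intro θ hθ
    show (θ - x₀) ^ r = |θ - x₀| ^ r
    rw [abs_of_pos (by linarith [hθ.1] : (0:ℝ) < θ - x₀)]
  have hleft : IntegrableOn (fun θ => |θ - x₀| ^ r) (Set.Ioc (x₀ - 1) x₀) volume := by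
    have h1 : IntervalIntegrable (fun x : ℝ => x ^ r) volume 0 1 :=
      intervalIntegral.intervalIntegrable_rpow' hr
    have h2 := (h1.comp_sub_left x₀).symm
    rw [sub_zero] at h2
    have h3 : IntegrableOn (fun θ => (x₀ - θ) ^ r) (Set.Ioc (x₀ - 1) x₀) volume :=
      (intervalIntegrable_iff_integrableOn_Ioc_of_le (by linarith : x₀ - 1 ≤ x₀)).1 h2
    apply h3.congr_fun ?_ measurableSet_Ioc
    intro θ hθ
    show (x₀ - θ) ^ r = |θ - x₀| ^ r
    rw [abs_sub_comm, abs_of_nonneg (by linarith [hθ.2] : (0:ℝ) ≤ x₀ - θ)]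
  have := hleft.union hright
  apply this.mono_set
  intro θ hθ
  rcases le_or_gt θ x₀ with h | h
  · exact Or.inl ⟨hθ.1, h⟩
  · exact Or.inr ⟨h, le_of_lt hθ.2⟩

theorem aux_u_pos {q θ₀ : ℝ} (hq0 : 0 ≤ q) (hq1 : q ≤ 1) (hc : Real.cos θ₀ ≠ 0) :
    0 < 1 - q^2 * Real.sin θ₀ ^ 2 := by
  have h1 : Real.sin θ₀ ^ 2 + Real.cos θ₀ ^ 2 = 1 := Real.sin_sq_add_cos_sq θ₀
  have h2 : 0 < Real.cos θ₀ ^ 2 := by positivity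
  have h3 : q ^ 2 ≤ 1 := by nlinarith
  nlinarith [sq_nonneg (Real.sin θ₀), sq_nonneg q]

theorem aux_bound_int {r C x₀ : ℝ} (hr : -1 < r) {f : ℝ → ℝ}
    (hm : AEStronglyMeasurable f (volume.restrict (Set.Ioo (x₀ - 1) (x₀ + 1))))
    (hb : ∀ θ ∈ Set.Ioo (x₀ - 1) (x₀ + 1), ‖f θ‖ ≤ C * |θ - x₀| ^ r) :
    IntegrableOn f (Set.Ioo (x₀ - 1) (x₀ + 1)) volume := by
  have hg : IntegrableOn (fun θ => C * |θ - x₀| ^ r) (Set.Ioo (x₀ - 1) (x₀ + 1)) volume :=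
    (aux_integrableOn_abs_sub_rpow hr x₀).const_mul C
  apply hg.mono' hm
  rw [ae_restrict_iff' measurableSet_Ioo]
  exact Filter.Eventually.of_forall hb

section
variable {p q : ℝ}

theorem aux_f0_meas (p q : ℝ) :
    Measurable (fun θ => |Real.cos θ| ^ (1 - 2/p) / Real.sqrt (1 - q^2 * Real.sin θ ^ 2)) := by
  fun_prop

theorem aux_f0_nonneg (p q : ℝ) (θ : ℝ) :
    0 ≤ |Real.cos θ| ^ (1 - 2/p) / Real.sqrt (1 - q^2 * Real.sin θ ^ 2) :=
  div_nonneg (Real.rpow_nonneg (abs_nonneg _) _) (Real.sqrt_nonneg _)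

theorem aux_f0_contAt (hq0 : 0 ≤ q) (hq1 : q ≤ 1) {θ₀ : ℝ} (hc : Real.cos θ₀ ≠ 0) :
    ContinuousAt (fun θ => |Real.cos θ| ^ (1 - 2/p) / Real.sqrt (1 - q^2 * Real.sin θ ^ 2)) θ₀ := by
  have hu := aux_u_pos hq0 hq1 hc
  apply ContinuousAt.div
  · exact (Real.continuous_cos.abs.continuousAt).rpow_const (Or.inl (abs_ne_zero.2 hc))
  · exact (Real.continuous_sqrt.comp
      (by continuity : Continuous fun θ => 1 - q^2 * Real.sin θ ^ 2)).continuousAt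
  · exact ne_of_gt (Real.sqrt_pos.2 hu)

theorem aux_f0_pos (hq0 : 0 ≤ q) (hq1 : q ≤ 1) {θ₀ : ℝ} (hc : Real.cos θ₀ ≠ 0) :
    0 < |Real.cos θ₀| ^ (1 - 2/p) / Real.sqrt (1 - q^2 * Real.sin θ₀ ^ 2) :=
  div_pos (Real.rpow_pos_of_pos (abs_pos.2 hc) _) (Real.sqrt_pos.2 (aux_u_pos hq0 hq1 hc))

theorem aux_f0_locint (hp : 1 < p) (hq0 : 0 ≤ q) (hq1 : q ≤ 1) (hR : ¬(q = 1 ∧ p ≤ 2)) :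
    LocallyIntegrable
      (fun θ => |Real.cos θ| ^ (1 - 2/p) / Real.sqrt (1 - q^2 * Real.sin θ ^ 2)) volume := by
  set f₀ := fun θ => |Real.cos θ| ^ (1 - 2/p) / Real.sqrt (1 - q^2 * Real.sin θ ^ 2) with hf₀
  intro x₀
  by_cases hc : Real.cos x₀ = 0
  · -- singular point
    refine ⟨Set.Ioo (x₀ - 1) (x₀ + 1), Ioo_mem_nhds (by linarith) (by linarith), ?_⟩
    have hm : AEStronglyMeasurable f₀ (volume.restrict (Set.Ioo (x₀ - 1) (x₀ + 1))) :=
      (aux_f0_meas p q).aestronglyMeasurable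
    rcases Decidable.em (q = 1) with hq1' | hq
    rotate_left
    · have hqlt : q < 1 := lt_of_le_of_ne hq1 hq
      have hd : (0:ℝ) < Real.sqrt (1 - q^2) := Real.sqrt_pos.2 (by nlinarith)
      have hden : ∀ θ, Real.sqrt (1 - q^2) ≤ Real.sqrt (1 - q^2 * Real.sin θ ^ 2) := by
        intro θ
        apply Real.sqrt_le_sqrt
        nlinarith [Real.sin_sq_le_one θ, sq_nonneg q]
      rcases le_or_gt 2 p with h2p | hp2'
      · -- p ≥ 2 : bounded
        apply aux_bound_int (r := 0) (C := Real.sqrt (1 - q^2)⁻¹) (by norm_num) hm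
        intro θ hθ
        rw [Real.norm_eq_abs, abs_of_nonneg (aux_f0_nonneg p q θ), Real.rpow_zero, mul_one]
        calc f₀ θ ≤ 1 / Real.sqrt (1 - q^2) := by
              apply div_le_div₀ (by norm_num) ?_ hd (hden θ)
              exact Real.rpow_le_one (abs_nonneg _) (Real.abs_cos_le_one θ)
                (by rw [sub_nonneg]; rw [div_le_one (by linarith)]; linarith)
          _ = Real.sqrt (1 - q^2)⁻¹ := by rw [one_div, Real.sqrt_inv]
      · -- p < 2 : singular power r = 1 - 2/p ∈ (-1, 0)
        set r := 1 - 2/p with hrdef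
        have hr1 : -1 < r := by
          have : 2/p < 2 := by rw [div_lt_iff₀ (by linarith)]; linarith
          simp only [hrdef]; linarith
        have hrneg : r < 0 := by
          have : 1 < 2/p := by rw [lt_div_iff₀ (by linarith)]; linarith
          simp only [hrdef]; linarith
        have hr0 : r ≤ 0 := le_of_lt hrneg
        apply aux_bound_int (r := r) (C := 2^(-r) / Real.sqrt (1 - q^2)) hr1 hm
        intro θ hθ
        rw [Real.norm_eq_abs, abs_of_nonneg (aux_f0_nonneg p q θ)]
        have hnum : |Real.cos θ| ^ r ≤ 2^(-r) * |θ - x₀| ^ r := by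
          rcases eq_or_ne θ x₀ with rfl | hne
          · rw [aux_cos_shift hc, sub_self, Real.sin_zero, abs_zero,
              Real.zero_rpow (ne_of_lt hrneg)]
            positivity
          · have habs : |θ - x₀| ≤ 1 := by
              rw [abs_le]; constructor <;> [linarith [hθ.1]; linarith [hθ.2]]
            have hlb := aux_sin_lb habs
            have hb0 : (0:ℝ) < |θ - x₀| / 2 := by
              have := sub_ne_zero.2 hne; positivity
            rw [aux_cos_shift hc]
            calc |Real.sin (θ - x₀)| ^ r ≤ (|θ - x₀| / 2) ^ r :=
                  Real.rpow_le_rpow_of_nonpos hb0 hlb hr0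
              _ = 2^(-r) * |θ - x₀| ^ r := by
                  rw [Real.div_rpow (abs_nonneg _) (by norm_num), div_eq_mul_inv,
                    ← Real.rpow_neg (by norm_num : (0:ℝ) ≤ 2)]
                  exact mul_comm _ _
        calc f₀ θ ≤ (2^(-r) * |θ - x₀| ^ r) / Real.sqrt (1 - q^2) := by
              apply div_le_div₀ ?_ hnum hd (hden θ)
              positivity
          _ = 2^(-r) / Real.sqrt (1 - q^2) * |θ - x₀| ^ r := by ring
    · have hp2' : 2 < p := by
        rcases not_and_or.1 hR with h | h
        · exact absurd hq1' h
        · push_neg at h; exact h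
      set r := -(2/p) with hrdef
      have hr1 : -1 < r := by
        have : 2/p < 1 := by rw [div_lt_one (by linarith)]; linarith
        simp only [hrdef]; linarith
      have hr0 : r ≤ 0 := by
        have : 0 < 2/p := by positivity
        simp only [hrdef]; linarith
      apply aux_bound_int (r := r) (C := 2^(-r)) hr1 hm
      intro θ hθ
      rw [Real.norm_eq_abs, abs_of_nonneg (aux_f0_nonneg p q θ)]
      have hden : Real.sqrt (1 - q^2 * Real.sin θ ^ 2) = |Real.cos θ| := by
        rw [hq1', one_pow, one_mul, ← Real.cos_sq', Real.sqrt_sq_eq_abs]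
      rcases eq_or_ne (Real.cos θ) 0 with hcθ | hcθ
      · simp only [hden, hcθ, abs_zero, div_zero]
        positivity
      · have hf0eq : |Real.cos θ| ^ (1 - 2/p) / Real.sqrt (1 - q^2 * Real.sin θ ^ 2)
            = |Real.cos θ| ^ r := by
          rw [hden]
          rw [div_eq_iff (abs_ne_zero.2 hcθ), ← Real.rpow_add_one (abs_ne_zero.2 hcθ)]
          congr 1
          simp only [hrdef]; ring
        rw [hf0eq]
        rcases eq_or_ne θ x₀ with rfl | hne
        · exact absurd hc hcθ
        · have habs : |θ - x₀| ≤ 1 := by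
            rw [abs_le]; constructor <;> [linarith [hθ.1]; linarith [hθ.2]]
          have hlb := aux_sin_lb habs
          have hb0 : (0:ℝ) < |θ - x₀| / 2 := by
            have := sub_ne_zero.2 hne; positivity
          rw [aux_cos_shift hc]
          calc |Real.sin (θ - x₀)| ^ r ≤ (|θ - x₀| / 2) ^ r :=
                Real.rpow_le_rpow_of_nonpos hb0 hlb hr0
            _ = 2^(-r) * |θ - x₀| ^ r := by
                rw [Real.div_rpow (abs_nonneg _) (by norm_num), div_eq_mul_inv,
                  ← Real.rpow_neg (by norm_num : (0:ℝ) ≤ 2)]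
                exact mul_comm _ _
  · -- regular point : continuous near x₀
    have hU : IsOpen {θ : ℝ | Real.cos θ ≠ 0} :=
      isOpen_compl_singleton.preimage Real.continuous_cos
    rcases Metric.isOpen_iff.1 hU x₀ hc with ⟨ε, hε, hball⟩
    refine ⟨Set.Icc (x₀ - ε/2) (x₀ + ε/2),
      Icc_mem_nhds (by linarith) (by linarith), ?_⟩
    apply ContinuousOn.integrableOn_Icc
    intro θ hθ
    apply (aux_f0_contAt hq0 hq1 ?_).continuousWithinAt
    apply hball
    rw [Metric.mem_ball, Real.dist_eq, abs_lt]
    constructor <;> [linarith [hθ.1]; linarith [hθ.2]]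
  
end

theorem aux_cos_zero_eq {a b : ℝ} (ha : Real.cos a = 0) (hb : Real.cos b = 0)
    (hab : |a - b| < π) : a = b := by
  rcases Real.cos_eq_zero_iff.1 ha with ⟨k, hk⟩
  rcases Real.cos_eq_zero_iff.1 hb with ⟨m, hm⟩
  have hπ := Real.pi_pos
  have hdiff : a - b = (k - m : ℤ) * π := by
    rw [hk, hm]; push_cast; ring
  rw [hdiff, abs_mul, abs_of_pos hπ] at hab
  have : |((k - m : ℤ) : ℝ)| < 1 := by
    by_contra hge
    push_neg at hge
    nlinarith
  have h0 : (k - m : ℤ) = 0 := by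
    have := abs_lt.1 this
    have h1 : (-1 : ℝ) < ((k - m : ℤ) : ℝ) := this.1
    have h2 : ((k - m : ℤ) : ℝ) < 1 := this.2
    exact_mod_cast by
      have h1' : (-1 : ℤ) < k - m := by exact_mod_cast h1
      have h2' : (k - m : ℤ) < 1 := by exact_mod_cast h2
      omega
  have : (k : ℤ) = m := by omega
  rw [hk, hm, this]

section Main
variable {p q : ℝ} (hp : 1 < p) (hq0 : 0 ≤ q) (hq1 : q ≤ 1)

theorem amDom_mem_self {y : ℝ} (hy : y ∈ amDom p q) : (q = 1 ∧ p ≤ 2) → y ∈ Ioo (-(π/2)) (π/2) := by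
  intro h; rwa [amDom, if_pos h] at hy

theorem amDom_zero : (0:ℝ) ∈ amDom p q := by
  rw [amDom]
  split_ifs with h
  · constructor <;> [linarith [pi_pos]; linarith [pi_pos]]
  · trivial

theorem amDom_cos_ne {y : ℝ} (hy : y ∈ amDom p q) (hR : q = 1 ∧ p ≤ 2) : Real.cos y ≠ 0 := by
  have := amDom_mem_self hy hR
  exact ne_of_gt (Real.cos_pos_of_mem_Ioo this)

theorem amDom_ordConn : Set.OrdConnected (amDom p q) := by
  rw [amDom]; split_ifs <;> [exact ordConnected_Ioo; exact ordConnected_univ]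

include hp hq0 hq1 in
theorem F1_intervalIntegrable {a b : ℝ} (ha : a ∈ amDom p q) (hb : b ∈ amDom p q) :
    IntervalIntegrable
      (fun θ => |Real.cos θ| ^ (1 - 2/p) / Real.sqrt (1 - q^2 * Real.sin θ ^ 2)) volume a b := by
  by_cases hR : q = 1 ∧ p ≤ 2
  · apply ContinuousOn.intervalIntegrable
    intro θ hθ
    have hθ' : θ ∈ amDom p q := amDom_ordConn.uIcc_subset ha hb hθ
    exact (aux_f0_contAt hq0 hq1 (amDom_cos_ne hθ' hR)).continuousWithinAt
  · rw [intervalIntegrable_iff]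
    exact ((aux_f0_locint hp hq0 hq1 hR).integrableOn_isCompact isCompact_uIcc).mono_set
      Ioc_subset_Icc_self

include hp hq0 hq1 in
theorem F1_monotoneOn : MonotoneOn (F1 p q) (amDom p q) := by
  intro u hu v hv huv
  have h1 := F1_intervalIntegrable hp hq0 hq1 amDom_zero hu
  have h2 := F1_intervalIntegrable hp hq0 hq1 hu hv
  have hadd := intervalIntegral.integral_add_adjacent_intervals h1 h2
  have hnn : 0 ≤ ∫ θ in u..v,
      |Real.cos θ| ^ (1 - 2/p) / Real.sqrt (1 - q^2 * Real.sin θ ^ 2) :=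
    intervalIntegral.integral_nonneg huv (fun θ _ => aux_f0_nonneg p q θ)
  show F1 p q u ≤ F1 p q v
  rw [F1, F1, ← hadd]
  linarith

theorem F1_injOn (am : ℝ → ℝ) (ham : IsInverseOn (F1 p q) am (amDom p q)) :
    Set.InjOn (F1 p q) (amDom p q) := by
  intro u hu v hv h
  have := congrArg am h
  rwa [ham.1 u hu, ham.1 v hv] at this

include hp hq0 hq1 in
theorem F1_strictMonoOn (am : ℝ → ℝ) (ham : IsInverseOn (F1 p q) am (amDom p q)) :
    StrictMonoOn (F1 p q) (amDom p q) := by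
  intro u hu v hv huv
  rcases lt_or_eq_of_le (F1_monotoneOn hp hq0 hq1 hu hv (le_of_lt huv)) with h | h
  · exact h
  · exact absurd (F1_injOn am ham hu hv h) (ne_of_lt huv)

include hp hq0 hq1 in
theorem am_continuous (am : ℝ → ℝ) (ham : IsInverseOn (F1 p q) am (amDom p q)) (x : ℝ) :
    ContinuousAt am x := by
  have hS : IsOpen (amDom p q) := by
    rw [amDom]; split_ifs <;> [exact isOpen_Ioo; exact isOpen_univ]
  rw [Metric.continuousAt_iff]
  intro ε hε
  set y₀ := am x with hy₀
  have hy₀S : y₀ ∈ amDom p q := (ham.2 x).1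
  rcases Metric.isOpen_iff.1 hS y₀ hy₀S with ⟨δ₀, hδ₀, hball⟩
  set ε' := min (ε/2) (δ₀/2) with hε'
  have hε'pos : 0 < ε' := by positivity
  have hy₁ : y₀ - ε' ∈ amDom p q := by
    apply hball; rw [Metric.mem_ball, Real.dist_eq]
    rw [abs_of_nonpos (by linarith)]
    have : ε' ≤ δ₀/2 := min_le_right _ _
    linarith
  have hy₂ : y₀ + ε' ∈ amDom p q := by
    apply hball; rw [Metric.mem_ball, Real.dist_eq]
    rw [abs_of_nonneg (by linarith)]
    have : ε' ≤ δ₀/2 := min_le_right _ _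
    linarith
  have hsm := F1_strictMonoOn hp hq0 hq1 am ham
  have hx : F1 p q y₀ = x := (ham.2 x).2
  have h₁ : F1 p q (y₀ - ε') < x := by
    rw [← hx]; exact hsm hy₁ hy₀S (by linarith)
  have h₂ : x < F1 p q (y₀ + ε') := by
    rw [← hx]; exact hsm hy₀S hy₂ (by linarith)
  refine ⟨min (x - F1 p q (y₀ - ε')) (F1 p q (y₀ + ε') - x),
    lt_min (by linarith) (by linarith), ?_⟩
  intro x' hx'
  rw [Real.dist_eq] at hx'
  have hx'1 : F1 p q (y₀ - ε') < x' := by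
    have := abs_lt.1 hx'
    have h3 := min_le_left (x - F1 p q (y₀ - ε')) (F1 p q (y₀ + ε') - x)
    linarith [this.1]
  have hx'2 : x' < F1 p q (y₀ + ε') := by
    have := abs_lt.1 hx'
    have h3 := min_le_right (x - F1 p q (y₀ - ε')) (F1 p q (y₀ + ε') - x)
    linarith [this.2]
  have hamx'S : am x' ∈ amDom p q := (ham.2 x').1
  have hfx' : F1 p q (am x') = x' := (ham.2 x').2
  have hgt : y₀ - ε' < am x' := by
    by_contra hle
    push_neg at hle
    have := F1_monotoneOn hp hq0 hq1 hamx'S hy₁ hle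
    rw [hfx'] at this
    linarith
  have hlt : am x' < y₀ + ε' := by
    by_contra hle
    push_neg at hle
    have := F1_monotoneOn hp hq0 hq1 hy₂ hamx'S hle
    rw [hfx'] at this
    linarith
  rw [Real.dist_eq, abs_lt]
  have : ε' ≤ ε/2 := min_le_left _ _
  constructor <;> linarith

include hp hq0 hq1 in
theorem F1_hasDerivAt {y : ℝ} (hy : y ∈ amDom p q) (hc : Real.cos y ≠ 0) :
    HasDerivAt (F1 p q)
      (|Real.cos y| ^ (1 - 2/p) / Real.sqrt (1 - q^2 * Real.sin y ^ 2)) y := by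
  have := intervalIntegral.integral_hasDerivAt_right
    (F1_intervalIntegrable hp hq0 hq1 amDom_zero hy)
    ⟨univ, univ_mem, (aux_f0_meas p q).aestronglyMeasurable⟩
    (aux_f0_contAt hq0 hq1 hc)
  exact this

include hp hq0 hq1 in
theorem am_hasDerivAt (am : ℝ → ℝ) (ham : IsInverseOn (F1 p q) am (amDom p q)) (x : ℝ)
    (hc : Real.cos (am x) ≠ 0) :
    HasDerivAt am
      (|Real.cos (am x)| ^ (1 - 2/p) / Real.sqrt (1 - q^2 * Real.sin (am x) ^ 2))⁻¹ x := by
  apply HasDerivAt.of_local_left_inverse (am_continuous hp hq0 hq1 am ham x)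
    (F1_hasDerivAt hp hq0 hq1 (ham.2 x).1 hc)
    (ne_of_gt (aux_f0_pos hq0 hq1 hc))
    (Filter.Eventually.of_forall (fun x' => (ham.2 x').2))

end Main


/-- If `A² = 4α²q²` and `λ = 2(p-1)|A|^{p-2}α²(2q²-1)`, then `k(s) = A·cn_p(αs+β,q)`
solves `p(|k|^{p-2}k)'' + (p-1)|k|^p k - λ k = 0` pointwise. -/
theorem cnp_solves_EL (p q A α β lam : ℝ) (hp : 1 < p) (hq : q ∈ Set.Icc (0:ℝ) 1)
    (hα : 0 ≤ α)
    (am : ℝ → ℝ) (ham : IsInverseOn (F1 p q) am (amDom p q))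
    (hA : A^2 = 4 * α^2 * q^2)
    (hlam : lam = 2 * (p-1) * |A| ^ (p-2) * α^2 * (2*q^2 - 1))
    (k : ℝ → ℝ)
    (hk : ∀ s, k s = A * (|Real.cos (am (α*s + β))| ^ (2/p - 1) * Real.cos (am (α*s + β)))) :
    ∀ s : ℝ,
      p * deriv (deriv (fun t => |k t| ^ (p-2) * k t)) s
        + (p-1) * |k s| ^ p * k s - lam * k s = 0 := by
  obtain ⟨hq0, hq1⟩ := hq
  by_cases hA0 : A = 0
  · -- trivial zero solution
    have hk0 : ∀ s, k s = 0 := fun s => by rw [hk s, hA0, zero_mul]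
    have hF0 : (fun t => |k t| ^ (p-2) * k t) = fun _ => (0:ℝ) := by
      funext t; rw [hk0 t, mul_comm]; simp
    intro s
    rw [hF0, hk0 s]
    simp
  · -- main case
    have hp0 : p ≠ 0 := by linarith
    have hαpos : 0 < α := by
      rcases eq_or_lt_of_le hα with rfl | h
      · exfalso; apply hA0; nlinarith
      · exact h
    have hqpos : 0 < q := by
      rcases eq_or_lt_of_le hq0 with rfl | h
      · exfalso; apply hA0; nlinarith
      · exact h
    set φ : ℝ → ℝ := fun s => am (α*s + β) with hφdef
    set w : ℝ → ℝ := fun s => |Real.cos (φ s)| ^ (1 - 2/p) * Real.cos (φ s) with hwdef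
    set w₁ : ℝ → ℝ := fun s =>
      -((2 - 2/p) * α) * (Real.sin (φ s) * Real.sqrt (1 - q^2 * Real.sin (φ s) ^ 2))
      with hw₁def
    set w₂ : ℝ → ℝ := fun s =>
      -((2 - 2/p) * α^2) *
        (|Real.cos (φ s)| ^ (2/p - 1) * Real.cos (φ s) * (1 - 2*q^2 * Real.sin (φ s) ^ 2))
      with hw₂def
    have hamcont : Continuous am :=
      continuous_iff_continuousAt.2 (am_continuous hp hq0 hq1 am ham)
    have haff : Continuous fun s : ℝ => α * s + β := by continuity
    have hφcont : Continuous φ := hamcont.comp haff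
    have hcosφ : Continuous fun s' => Real.cos (φ s') := Real.continuous_cos.comp hφcont
    have hsinφ : Continuous fun s' => Real.sin (φ s') := Real.continuous_sin.comp hφcont
    have husq : Continuous fun s' => Real.sqrt (1 - q^2 * Real.sin (φ s') ^ 2) :=
      Real.continuous_sqrt.comp (continuous_const.sub (continuous_const.mul (hsinφ.pow 2)))
    have hw₁cont : Continuous w₁ := by
      rw [hw₁def]
      exact continuous_const.mul (hsinφ.mul husq)
    have haminj : Function.Injective am := by
      intro x y h
      have := congrArg (F1 p q) h
      rwa [(ham.2 x).2, (ham.2 y).2] at this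
    have hφinj : Function.Injective φ := by
      intro x y h
      have := haminj h
      have : α * x = α * y := by linarith [this]
      exact mul_left_cancel₀ (ne_of_gt hαpos) this
    have haffder : ∀ s : ℝ, HasDerivAt (fun s : ℝ => α * s + β) α s := by
      intro s
      simpa using ((hasDerivAt_id s).const_mul α).add_const β
    have hφder : ∀ s, Real.cos (φ s) ≠ 0 →
        HasDerivAt φ
          ((|Real.cos (φ s)| ^ (1 - 2/p) /
            Real.sqrt (1 - q^2 * Real.sin (φ s) ^ 2))⁻¹ * α) s := by
      intro s hc
      exact (am_hasDerivAt hp hq0 hq1 am ham (α*s+β) hc).comp s (haffder s)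
    -- derivative of w at good points
    have hgood1 : ∀ s, Real.cos (φ s) ≠ 0 → HasDerivAt w (w₁ s) s := by
      intro s hc
      have hu := aux_u_pos (θ₀ := φ s) hq0 hq1 hc
      have hG := aux_deriv_abs_cos_rpow_mul (t := 1 - 2/p) hc
      have hcomp := hG.comp s (hφder s hc)
      have hval :
          -((1 - 2/p + 1) * (|Real.cos (φ s)| ^ (1 - 2/p) * Real.sin (φ s))) *
            ((|Real.cos (φ s)| ^ (1 - 2/p) /
              Real.sqrt (1 - q^2 * Real.sin (φ s) ^ 2))⁻¹ * α) = w₁ s := by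
        rw [hw₁def]
        have hP : |Real.cos (φ s)| ^ (1 - 2/p) ≠ 0 :=
          ne_of_gt (Real.rpow_pos_of_pos (abs_pos.2 hc) _)
        have hU : Real.sqrt (1 - q^2 * Real.sin (φ s) ^ 2) ≠ 0 :=
          ne_of_gt (Real.sqrt_pos.2 hu)
        field_simp
        ring
      rw [← hval]
      exact hcomp
    -- derivative of w₁ at good points
    have hgood2 : ∀ s, Real.cos (φ s) ≠ 0 → HasDerivAt w₁ (w₂ s) s := by
      intro s hc
      have hu := aux_u_pos (θ₀ := φ s) hq0 hq1 hc
      have hH := aux_deriv_sin_sqrt (q := q) hu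
      have hcomp := (hH.comp s (hφder s hc)).const_mul (-((2 - 2/p) * α))
      have hval : -((2 - 2/p) * α) *
          (Real.cos (φ s) * (1 - 2*q^2 * Real.sin (φ s) ^ 2) /
              Real.sqrt (1 - q^2 * Real.sin (φ s) ^ 2) *
            ((|Real.cos (φ s)| ^ (1 - 2/p) /
              Real.sqrt (1 - q^2 * Real.sin (φ s) ^ 2))⁻¹ * α)) = w₂ s := by
        simp only [hw₂def]
        have hP : (0:ℝ) < |Real.cos (φ s)| ^ (1 - 2/p) :=
          Real.rpow_pos_of_pos (abs_pos.2 hc) _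
        have hU : (0:ℝ) < Real.sqrt (1 - q^2 * Real.sin (φ s) ^ 2) := Real.sqrt_pos.2 hu
        have hMP : |Real.cos (φ s)| ^ (2/p - 1) = (|Real.cos (φ s)| ^ (1 - 2/p))⁻¹ := by
          rw [← Real.rpow_neg (abs_nonneg _)]
          norm_num
        rw [hMP]
        field_simp
      rw [← hval]
      exact hcomp
    -- full derivatives everywhere
    have hbadgood : ∀ s, Real.cos (φ s) = 0 →
        ∀ᶠ s' in 𝓝[≠] s, Real.cos (φ s') ≠ 0 := by
      intro s hc
      have hnear : ∀ᶠ s' in 𝓝 s, |φ s' - φ s| < π := by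
        have := hφcont.continuousAt (x := s)
        have h2 := Metric.tendsto_nhds.1 this π Real.pi_pos
        simpa [Real.dist_eq] using h2
      filter_upwards [eventually_nhdsWithin_of_eventually_nhds hnear,
        self_mem_nhdsWithin] with s' h1 h2
      intro hc'
      exact h2 (hφinj (aux_cos_zero_eq hc' hc h1))
    have hR2 : ∀ s, Real.cos (φ s) = 0 → ¬(q = 1 ∧ p ≤ 2) := by
      intro s hc hcontra
      exact amDom_cos_ne (ham.2 (α*s+β)).1 hcontra hc
    have hder1 : ∀ s, HasDerivAt w (w₁ s) s := by
      intro s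
      by_cases hc : Real.cos (φ s) = 0
      · apply hasDerivAt_of_eventually_hasDerivAt
        · filter_upwards [hbadgood s hc] with s' hs'
          exact hgood1 s' hs'
        · -- continuity of w at s
          have h1 : ContinuousAt (fun x : ℝ => |x| ^ (1 - 2/p) * x) (Real.cos (φ s)) := by
            rw [hc]
            apply aux_cont_abs_rpow_mul
            have : 2/p < 2 := by rw [div_lt_iff₀ (by linarith)]; linarith
            linarith
          have h2 := ContinuousAt.comp (x := s) h1 hcosφ.continuousAt
          rw [hwdef]
          exact h2
        · exact hw₁cont.continuousAt
      · exact hgood1 s hc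
    have hder2 : ∀ s, HasDerivAt w₁ (w₂ s) s := by
      intro s
      by_cases hc : Real.cos (φ s) = 0
      · apply hasDerivAt_of_eventually_hasDerivAt
        · filter_upwards [hbadgood s hc] with s' hs'
          exact hgood2 s' hs'
        · exact hw₁cont.continuousAt
        · -- continuity of w₂ at s
          have h1 : ContinuousAt (fun x : ℝ => |x| ^ (2/p - 1) * x) (Real.cos (φ s)) := by
            rw [hc]
            apply aux_cont_abs_rpow_mul
            have : 0 < 2/p := by positivity
            linarith
          have h2 := ContinuousAt.comp (x := s) h1 hcosφ.continuousAt
          have h3 : Continuous (fun s' => 1 - 2*q^2 * Real.sin (φ s') ^ 2) :=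
            continuous_const.sub (continuous_const.mul (hsinφ.pow 2))
          rw [hw₂def]
          exact continuousAt_const.mul (h2.mul h3.continuousAt)
      · exact hgood2 s hc
    -- identify |k|^{p-2} k with C * w
    have hk' : ∀ s, k s = A * (|Real.cos (φ s)| ^ (2/p - 1) * Real.cos (φ s)) := hk
    have hApos : (0:ℝ) < |A| := abs_pos.2 hA0
    have habsk : ∀ s, Real.cos (φ s) ≠ 0 →
        |k s| = |A| * |Real.cos (φ s)| ^ (2/p) := by
      intro s hc
      have hm : (0:ℝ) < |Real.cos (φ s)| := abs_pos.2 hc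
      rw [hk' s, abs_mul, abs_mul,
        abs_of_nonneg (Real.rpow_nonneg (abs_nonneg _) _),
        ← Real.rpow_add_one (ne_of_gt hm)]
      norm_num
    have hFw : (fun t => |k t| ^ (p-2) * k t) = fun s => (|A|^(p-2) * A) * w s := by
      funext s
      rcases eq_or_ne (Real.cos (φ s)) 0 with hc | hc
      · have hks : k s = 0 := by rw [hk' s, hc]; simp
        simp [hks, hwdef, hc]
      · have hm : (0:ℝ) < |Real.cos (φ s)| := abs_pos.2 hc
        rw [habsk s hc, hk' s, hwdef]
        rw [Real.mul_rpow (abs_nonneg A) (Real.rpow_nonneg (abs_nonneg _) _),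
          ← Real.rpow_mul (abs_nonneg _)]
        have hexp : (2/p)*(p-2) + (2/p-1) = 1-2/p := by field_simp; ring
        have hmm : |Real.cos (φ s)| ^ ((2/p)*(p-2)) * |Real.cos (φ s)| ^ (2/p-1)
            = |Real.cos (φ s)| ^ (1-2/p) := by
          rw [← Real.rpow_add hm, hexp]
        linear_combination (|A|^(p-2) * A * Real.cos (φ s)) * hmm
    have hd1 : deriv (fun t => |k t| ^ (p-2) * k t) = fun s => (|A|^(p-2) * A) * w₁ s := by
      funext s
      rw [hFw]
      exact ((hder1 s).const_mul (|A|^(p-2) * A)).deriv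
    intro s
    have hd2 : deriv (deriv (fun t => |k t| ^ (p-2) * k t)) s = (|A|^(p-2) * A) * w₂ s := by
      rw [hd1]
      exact ((hder2 s).const_mul (|A|^(p-2) * A)).deriv
    rw [hd2, hlam, hk' s]
    rcases eq_or_ne (Real.cos (φ s)) 0 with hc | hc
    · simp [hw₂def, hc]
    · have hm : (0:ℝ) < |Real.cos (φ s)| := abs_pos.2 hc
      have hkp : |A * (|Real.cos (φ s)| ^ (2/p-1) * Real.cos (φ s))| ^ p
          = |A|^(p-2) * A^2 * Real.cos (φ s)^2 := by
        have h0 : |A * (|Real.cos (φ s)| ^ (2/p-1) * Real.cos (φ s))|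
            = |A| * |Real.cos (φ s)| ^ (2/p) := by
          rw [← hk' s]; exact habsk s hc
        rw [h0, Real.mul_rpow (abs_nonneg A) (Real.rpow_nonneg (abs_nonneg _) _),
          ← Real.rpow_mul (abs_nonneg _)]
        have h1 : (2/p) * p = 2 := by field_simp
        rw [h1]
        have h2 : |Real.cos (φ s)| ^ (2:ℝ) = Real.cos (φ s)^2 := by
          rw [show (2:ℝ) = ((2:ℕ):ℝ) by norm_num, Real.rpow_natCast, sq_abs]
        have h3 : |A| ^ p = |A|^(p-2) * A^2 := by
          have h4 := Real.rpow_add hApos (p-2) 2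
          have h5 : |A| ^ (2:ℝ) = A^2 := by
            rw [show (2:ℝ) = ((2:ℕ):ℝ) by norm_num, Real.rpow_natCast, sq_abs]
          rw [h5] at h4
          rw [show (p-2) + 2 = p by ring] at h4
          exact h4
        rw [h2, h3]
      rw [hkp, hw₂def]
      have hsc : Real.sin (φ s)^2 + Real.cos (φ s)^2 = 1 := Real.sin_sq_add_cos_sq (φ s)
      have hp2 : p * (2 - 2/p) = 2*p - 2 := by field_simp
      simp only []
      linear_combination
        (-(|A|^(p-2) * A * (|Real.cos (φ s)| ^ (2/p-1)) * Real.cos (φ s) * α^2 *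
          (1 - 2*q^2*Real.sin (φ s)^2))) * hp2
        + ((p-1) * |A|^(p-2) * A * (|Real.cos (φ s)| ^ (2/p-1)) * Real.cos (φ s)^3) * hA
        + (4*(p-1) * |A|^(p-2) * A * (|Real.cos (φ s)| ^ (2/p-1)) * Real.cos (φ s) * α^2 * q^2)
          * hsc
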